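/- Let $\{(A_i, B_i) : i \in I\}$ be a finite collection of pairs of finite sets such that $A_i \cap B_j = \emptyset$ if and only if $i = j$. Then $\sum_{i \in I} \binom{|A_i| + |B_i|}{|A_i|}^{-1} \le 1$. -/

import Mathlib

open Finset

namespace BollAux

variable {m : ℕ}

/-- Two elements of a finset with same rank are equal. -/
lemma rank_inj {s : Finset (Fin m)} {x y : Fin m} (hx : x ∈ s) (hy : y ∈ s)
    (h : #{z ∈ s | z < x} = #{z ∈ s | z < y}) : x = y := by
  rcases lt_trichotomy x y with h' | h' | h'
  · exfalso
    have hsub : {z ∈ s | z < x} ⊆ {z ∈ s | z < y} := by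
      intro z hz
      simp only [mem_filter] at *
      exact ⟨hz.1, hz.2.trans h'⟩
    have : {z ∈ s | z < x} ⊂ {z ∈ s | z < y} :=
      ⟨hsub, fun hsub' => absurd (mem_filter.mp (hsub' (mem_filter.mpr ⟨hx, h'⟩))).2
        (lt_irrefl x)⟩
    exact absurd h (Nat.ne_of_lt (card_lt_card this))
  · exact h'
  · exfalso
    have hsub : {z ∈ s | z < y} ⊆ {z ∈ s | z < x} := by
      intro z hz
      simp only [mem_filter] at *
      exact ⟨hz.1, hz.2.trans h'⟩
    have : {z ∈ s | z < y} ⊂ {z ∈ s | z < x} :=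
      ⟨hsub, fun hsub' => absurd (mem_filter.mp (hsub' (mem_filter.mpr ⟨hy, h'⟩))).2
        (lt_irrefl y)⟩
    exact absurd h.symm (Nat.ne_of_lt (card_lt_card this))

lemma rank_image {g : Fin m → Fin m} (hg : Function.Injective g) (s : Finset (Fin m))
    (u : Fin m) : #{z ∈ s.image g | z < g u} = #{y ∈ s | g y < g u} := by
  rw [filter_image, card_image_of_injective _ hg]

lemma rank_inj' {g : Fin m → Fin m} (hg : Function.Injective g) {s : Finset (Fin m)}
    {x y : Fin m} (hx : x ∈ s) (hy : y ∈ s)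
    (h : #{z ∈ s | g z < g x} = #{z ∈ s | g z < g y}) : x = y := by
  apply hg
  apply rank_inj (mem_image_of_mem g hx) (mem_image_of_mem g hy)
  rwa [rank_image hg, rank_image hg]

lemma filter_lt_card {g : Fin m → Fin m} {s : Finset (Fin m)} {x : Fin m} (hx : x ∈ s) :
    #{y ∈ s | g y < g x} < s.card :=
  card_lt_card ⟨filter_subset _ _, fun hsub =>
    absurd (mem_filter.mp (hsub hx)).2 (lt_irrefl _)⟩

lemma emb_eq {s t : Finset (Fin m)} (hst : s = t) {k : ℕ} {hk : s.card = k}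
    {hk' : t.card = k} {i j : Fin k}
    (h : s.orderEmbOfFin hk i = t.orderEmbOfFin hk' j) : (i : ℕ) = (j : ℕ) := by
  subst hst
  exact orderEmbOfFin_eq_orderEmbOfFin_iff.mp h

/-- Core counting bound: `m! ≤ C(a+b,a) * #{π : all of A before all of B}`. -/
lemma perm_bound (A B : Finset (Fin m)) (hAB : A ∩ B = ∅) :
    (Nat.factorial m) ≤ ((A.card + B.card).choose A.card) *
      #{π : Equiv.Perm (Fin m) | ∀ x ∈ A, ∀ y ∈ B, π x < π y} := by
  classical
  set a := A.card with ha
  set b := B.card with hb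
  set C : Finset (Fin m) := A ∪ B with hCdef
  have hdisj : Disjoint A B := disjoint_iff_inter_eq_empty.mpr hAB
  have hC : C.card = a + b := card_union_of_disjoint hdisj
  -- rank function
  set r : Equiv.Perm (Fin m) → Fin m → ℕ := fun σ x =>
    if x ∈ A then #{y ∈ A | σ y < σ x} else a + #{y ∈ B | σ y < σ x} with hrdef
  have hr : ∀ σ : Equiv.Perm (Fin m), ∀ x ∈ C, r σ x < a + b := by
    intro σ x hx
    by_cases hxA : x ∈ A
    · have := filter_lt_card (g := σ) hxA
      simp only [hrdef, if_pos hxA]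
      omega
    · have hxB : x ∈ B := by
        rcases mem_union.mp hx with h | h
        · exact absurd h hxA
        · exact h
      have := filter_lt_card (g := σ) hxB
      simp only [hrdef, if_neg hxA]
      omega
  set P : Equiv.Perm (Fin m) → Finset (Fin m) := fun σ => C.image σ with hPdef
  have hP : ∀ σ : Equiv.Perm (Fin m), (P σ).card = a + b := fun σ => by
    rw [hPdef]; rw [card_image_of_injective _ σ.injective, hC]
  set f : Equiv.Perm (Fin m) → Fin m → Fin m := fun σ x =>
    if hx : x ∈ C then (P σ).orderEmbOfFin (hP σ) ⟨r σ x, hr σ x hx⟩ else σ x with hfdef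
  have hfmem : ∀ σ, ∀ x ∈ C, f σ x ∈ P σ := by
    intro σ x hx
    simp only [hfdef, dif_pos hx]
    exact orderEmbOfFin_mem _ _ _
  have hfnotmem : ∀ σ : Equiv.Perm (Fin m), ∀ x, x ∉ C → f σ x ∉ P σ := by
    intro σ x hx hmem
    simp only [hfdef, dif_neg hx] at hmem
    obtain ⟨c, hc, hcx⟩ := mem_image.mp hmem
    exact hx (σ.injective hcx ▸ hc)
  have hfinj : ∀ σ : Equiv.Perm (Fin m), Function.Injective (f σ) := by
    intro σ x y hxy
    by_cases hx : x ∈ C <;> by_cases hy : y ∈ C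
    · have hreq : r σ x = r σ y := by
        have hxy' := hxy
        simp only [hfdef, dif_pos hx, dif_pos hy] at hxy'
        exact orderEmbOfFin_eq_orderEmbOfFin_iff.mp hxy'
      by_cases hxA : x ∈ A <;> by_cases hyA : y ∈ A
      · apply rank_inj' σ.injective hxA hyA
        simpa only [hrdef, if_pos hxA, if_pos hyA] using hreq
      · exfalso
        have := filter_lt_card (g := σ) hxA
        simp only [hrdef, if_pos hxA, if_neg hyA] at hreq
        omega
      · exfalso
        have := filter_lt_card (g := σ) hyA
        simp only [hrdef, if_neg hxA, if_pos hyA] at hreq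
        omega
      · have hxB : x ∈ B := by
          rcases mem_union.mp hx with h | h
          · exact absurd h hxA
          · exact h
        have hyB : y ∈ B := by
          rcases mem_union.mp hy with h | h
          · exact absurd h hyA
          · exact h
        apply rank_inj' σ.injective hxB hyB
        simp only [hrdef, if_neg hxA, if_neg hyA] at hreq
        omega
    · exact absurd (hxy ▸ hfmem σ x hx) (hfnotmem σ y hy)
    · exact absurd (hxy.symm ▸ hfmem σ y hy) (hfnotmem σ x hx)
    · have hxy' := hxy
      simp only [hfdef, dif_neg hx, dif_neg hy] at hxy'
      exact σ.injective hxy'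
  set Φ : Equiv.Perm (Fin m) → Equiv.Perm (Fin m) := fun σ =>
    Equiv.ofBijective (f σ) (Finite.injective_iff_bijective.mp (hfinj σ)) with hΦdef
  have hΦcoe : ∀ σ x, Φ σ x = f σ x := fun σ x => rfl
  -- Φ σ is in the good set
  have hΦgood : ∀ σ : Equiv.Perm (Fin m),
      Φ σ ∈ ({π : Equiv.Perm (Fin m) | ∀ x ∈ A, ∀ y ∈ B, π x < π y} : Finset _) := by
    intro σ
    simp only [mem_filter, mem_univ, true_and]
    intro x hxA y hyB
    have hxC : x ∈ C := mem_union_left _ hxA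
    have hyC : y ∈ C := mem_union_right _ hyB
    have hyA : y ∉ A := fun hyA => (disjoint_left.mp hdisj hyA) hyB
    rw [hΦcoe, hΦcoe]
    simp only [hfdef, dif_pos hxC, dif_pos hyC]
    apply ((P σ).orderEmbOfFin (hP σ)).strictMono
    have h1 : r σ x < a := by
      have := filter_lt_card (g := σ) hxA
      simp only [hrdef, if_pos hxA]; omega
    have h2 : a ≤ r σ y := by
      simp only [hrdef, if_neg hyA]; omega
    exact Fin.mk_lt_mk.mpr (lt_of_lt_of_le h1 h2)
  -- image of C under Φ σ is P σ
  have hΦimg : ∀ σ, C.image (Φ σ) = P σ := by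
    intro σ
    apply eq_of_subset_of_card_le
    · intro z hz
      obtain ⟨c, hc, hcz⟩ := mem_image.mp hz
      exact hcz ▸ hfmem σ c hc
    · rw [hP, card_image_of_injective _ (Φ σ).injective, hC]
  -- fiber bound
  have hfiber : ∀ τ ∈ Finset.univ.image Φ,
      #{σ ∈ (Finset.univ : Finset (Equiv.Perm (Fin m))) | Φ σ = τ} ≤ (a + b).choose a := by
    intro τ _
    have hQ : (C.image τ).card = a + b := by
      rw [card_image_of_injective _ τ.injective, hC]
    calc #{σ ∈ (Finset.univ : Finset (Equiv.Perm (Fin m))) | Φ σ = τ}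
        ≤ ((C.image τ).powersetCard a).card := ?_
      _ = (a + b).choose a := by rw [card_powersetCard, hQ]
    refine card_le_card_of_injOn (fun σ => A.image (⇑σ)) ?_ ?_
    · intro σ hσ
      simp only [mem_coe, mem_filter, mem_univ, true_and] at hσ ⊢
      rw [mem_powersetCard]
      constructor
      · intro z hz
        rw [← hσ, hΦimg σ]
        obtain ⟨c, hc, hcz⟩ := mem_image.mp hz
        exact hcz ▸ mem_image_of_mem _ (mem_union_left _ hc)
      · rw [card_image_of_injective _ σ.injective]
    · -- injectivity on the fiber
      intro σ hσ σ' hσ' hS0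
      have hS : A.image ⇑σ = A.image ⇑σ' := hS0
      simp only [mem_coe, mem_filter, mem_univ, true_and] at hσ hσ'
      have hfeq : ∀ x, f σ x = f σ' x := by
        intro x
        rw [← hΦcoe, ← hΦcoe, hσ, hσ']
      have hPP : P σ = P σ' := by
        rw [← hΦimg σ, ← hΦimg σ', hσ, hσ']
      have hBimg : B.image ⇑σ = B.image ⇑σ' := by
        have e1 : P σ = A.image ⇑σ ∪ B.image ⇑σ := by rw [hPdef]; exact image_union ..
        have e2 : P σ' = A.image ⇑σ' ∪ B.image ⇑σ' := by rw [hPdef]; exact image_union ..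
        have d1 : Disjoint (A.image ⇑σ) (B.image ⇑σ) := (disjoint_image σ.injective).mpr hdisj
        have d2 : Disjoint (A.image ⇑σ') (B.image ⇑σ') := (disjoint_image σ'.injective).mpr hdisj
        calc B.image ⇑σ = (A.image ⇑σ ∪ B.image ⇑σ) \ A.image ⇑σ :=
              (union_sdiff_cancel_left d1).symm
          _ = (A.image ⇑σ' ∪ B.image ⇑σ') \ A.image ⇑σ' := by rw [← e1, ← e2, hPP, hS]
          _ = B.image ⇑σ' := union_sdiff_cancel_left d2
      apply Equiv.ext
      intro x
      by_cases hxC : x ∈ C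
      · have hfx := hfeq x
        simp only [hfdef, dif_pos hxC] at hfx
        have hreq : r σ x = r σ' x := emb_eq hPP hfx
        by_cases hxA : x ∈ A
        · simp only [hrdef, if_pos hxA] at hreq
          have e1 := rank_image σ.injective A x
          have e2 := rank_image σ'.injective A x
          have h1 : #{z ∈ A.image ⇑σ | z < σ x} = #{z ∈ A.image ⇑σ | z < σ' x} := by
            rw [e1, hreq, ← e2, hS]
          exact rank_inj (mem_image_of_mem _ hxA)
            (by rw [hS]; exact mem_image_of_mem _ hxA) h1
        · have hxB : x ∈ B := by
            rcases mem_union.mp hxC with h | h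
            · exact absurd h hxA
            · exact h
          simp only [hrdef, if_neg hxA] at hreq
          have hreq' : #{y ∈ B | σ y < σ x} = #{y ∈ B | σ' y < σ' x} := by omega
          have e1 := rank_image σ.injective B x
          have e2 := rank_image σ'.injective B x
          have h1 : #{z ∈ B.image ⇑σ | z < σ x} = #{z ∈ B.image ⇑σ | z < σ' x} := by
            rw [e1, hreq', ← e2, hBimg]
          exact rank_inj (mem_image_of_mem _ hxB)
            (by rw [hBimg]; exact mem_image_of_mem _ hxB) h1
      · have hfx := hfeq x
        simpa only [hfdef, dif_neg hxC] using hfx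
  -- assemble
  have key := card_le_mul_card_image (f := Φ) Finset.univ ((a + b).choose a) hfiber
  have himg : Finset.univ.image Φ ⊆
      ({π : Equiv.Perm (Fin m) | ∀ x ∈ A, ∀ y ∈ B, π x < π y} : Finset _) := by
    intro τ hτ
    obtain ⟨σ, _, hστ⟩ := mem_image.mp hτ
    exact hστ ▸ hΦgood σ
  calc (Nat.factorial m) = (Finset.univ : Finset (Equiv.Perm (Fin m))).card := by
        rw [card_univ, Fintype.card_perm, Fintype.card_fin]
    _ ≤ (a + b).choose a * (Finset.univ.image Φ).card := key
    _ ≤ (a + b).choose a *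
        #{π : Equiv.Perm (Fin m) | ∀ x ∈ A, ∀ y ∈ B, π x < π y} :=
        Nat.mul_le_mul_left _ (card_le_card himg)

/-- Bollobás over `Fin m`. -/
theorem boll_fin {ι : Type*} {m : ℕ} (I : Finset ι) (A B : ι → Finset (Fin m))
    (h : ∀ i ∈ I, ∀ j ∈ I, A i ∩ B j = ∅ ↔ i = j) :
    ∑ i ∈ I, ((((A i).card + (B i).card).choose (A i).card : ℕ) : ℝ)⁻¹ ≤ 1 := by
  classical
  set G : ι → Finset (Equiv.Perm (Fin m)) := fun i =>
    {π : Equiv.Perm (Fin m) | ∀ x ∈ A i, ∀ y ∈ B i, π x < π y} with hGdef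
  have hdisjG : ∀ i ∈ I, ∀ j ∈ I, i ≠ j → Disjoint (G i) (G j) := by
    intro i hi j hj hij
    refine disjoint_left.mpr fun π hπi hπj => ?_
    have h1 : A i ∩ B j ≠ ∅ := fun he => hij ((h i hi j hj).mp he)
    have h2 : A j ∩ B i ≠ ∅ := fun he => hij (((h j hj i hi).mp he).symm)
    obtain ⟨x, hx⟩ := nonempty_iff_ne_empty.mpr h1
    obtain ⟨y, hy⟩ := nonempty_iff_ne_empty.mpr h2
    simp only [hGdef, mem_filter, mem_univ, true_and] at hπi hπj
    have l1 := hπi x (mem_inter.mp hx).1 y (mem_inter.mp hy).2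
    have l2 := hπj y (mem_inter.mp hy).1 x (mem_inter.mp hx).2
    exact absurd l1 (not_lt.mpr l2.le)
  have hcard : ∀ i ∈ I, (Nat.factorial m) ≤ (((A i).card + (B i).card).choose (A i).card) * (G i).card :=
    fun i hi => perm_bound (A i) (B i) ((h i hi i hi).mpr rfl)
  have hsum : ∑ i ∈ I, (G i).card ≤ (Nat.factorial m) := by
    rw [← card_biUnion hdisjG]
    calc (I.biUnion G).card ≤ Fintype.card (Equiv.Perm (Fin m)) := card_le_univ _
      _ = (Nat.factorial m) := by rw [Fintype.card_perm, Fintype.card_fin]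
  have hm : (0 : ℝ) < ((Nat.factorial m) : ℝ) := by
    exact_mod_cast Nat.factorial_pos m
  have step : ∀ i ∈ I, ((((A i).card + (B i).card).choose (A i).card : ℕ) : ℝ)⁻¹ ≤
      ((G i).card : ℝ) / ((Nat.factorial m) : ℝ) := by
    intro i hi
    have hcpos : 0 < (((A i).card + (B i).card).choose (A i).card) :=
      Nat.choose_pos (Nat.le_add_right _ _)
    rw [inv_eq_one_div, div_le_div_iff₀ (by exact_mod_cast hcpos) hm]
    have := hcard i hi
    calc (1 : ℝ) * ((Nat.factorial m) : ℝ) = ((Nat.factorial m) : ℝ) := one_mul _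
      _ ≤ (((((A i).card + (B i).card).choose (A i).card) * (G i).card : ℕ) : ℝ) := by
          exact_mod_cast this
      _ = ((G i).card : ℝ) * ((((A i).card + (B i).card).choose (A i).card : ℕ) : ℝ) := by
          push_cast; ring
  calc ∑ i ∈ I, ((((A i).card + (B i).card).choose (A i).card : ℕ) : ℝ)⁻¹
      ≤ ∑ i ∈ I, ((G i).card : ℝ) / ((Nat.factorial m) : ℝ) := Finset.sum_le_sum step
    _ = (∑ i ∈ I, ((G i).card : ℝ)) / ((Nat.factorial m) : ℝ) := by rw [Finset.sum_div]
    _ ≤ ((Nat.factorial m) : ℝ) / ((Nat.factorial m) : ℝ) := by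
        gcongr
        exact_mod_cast hsum
    _ = 1 := div_self hm.ne'

end BollAux

theorem stmt_6 {ι α : Type*} [DecidableEq α] (I : Finset ι)
    (A B : ι → Finset α)
    (h : ∀ i ∈ I, ∀ j ∈ I, A i ∩ B j = ∅ ↔ i = j) :
    ∑ i ∈ I, (((((A i).card + (B i).card).choose (A i).card : ℕ) : ℝ))⁻¹ ≤ 1 := by
  classical
  set X : Finset α := I.biUnion (fun i => A i ∪ B i) with hXdef
  set n := X.card with hn
  set f : α → Fin (n + 1) := fun x =>
    if hx : x ∈ X then Fin.castSucc (X.equivFin ⟨x, hx⟩) else Fin.last n with hfdef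
  have hfX : ∀ x (hx : x ∈ X), f x = Fin.castSucc (X.equivFin ⟨x, hx⟩) := by
    intro x hx
    simp only [hfdef]
    rw [dif_pos hx]
  have hinj : Set.InjOn f X := by
    intro x hx y hy hxy
    rw [hfX x hx, hfX y hy] at hxy
    have := X.equivFin.injective (Fin.castSucc_injective _ hxy)
    exact Subtype.ext_iff.mp this
  have hsubA : ∀ i ∈ I, (A i : Set α) ⊆ X := by
    intro i hi x hx
    exact mem_coe.mpr (mem_biUnion.mpr ⟨i, hi, mem_union_left _ hx⟩)
  have hsubB : ∀ i ∈ I, (B i : Set α) ⊆ X := by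
    intro i hi x hx
    exact mem_coe.mpr (mem_biUnion.mpr ⟨i, hi, mem_union_right _ hx⟩)
  set A' : ι → Finset (Fin (n + 1)) := fun i => (A i).image f with hA'
  set B' : ι → Finset (Fin (n + 1)) := fun i => (B i).image f with hB'
  have h' : ∀ i ∈ I, ∀ j ∈ I, A' i ∩ B' j = ∅ ↔ i = j := by
    intro i hi j hj
    rw [← h i hi j hj]
    constructor
    · intro he
      by_contra hne
      obtain ⟨x, hx⟩ := nonempty_iff_ne_empty.mpr hne
      have hxA := (mem_inter.mp hx).1
      have hxB := (mem_inter.mp hx).2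
      have : f x ∈ A' i ∩ B' j :=
        mem_inter.mpr ⟨mem_image_of_mem f hxA, mem_image_of_mem f hxB⟩
      rw [he] at this
      exact absurd this (notMem_empty _)
    · intro he
      by_contra hne
      obtain ⟨z, hz⟩ := nonempty_iff_ne_empty.mpr hne
      obtain ⟨x, hxA, hxz⟩ := mem_image.mp (mem_inter.mp hz).1
      obtain ⟨y, hyB, hyz⟩ := mem_image.mp (mem_inter.mp hz).2
      have hxy : x = y := hinj (hsubA i hi hxA) (hsubB j hj hyB) (hxz.trans hyz.symm)
      have : x ∈ A i ∩ B j := mem_inter.mpr ⟨hxA, hxy ▸ hyB⟩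
      rw [he] at this
      exact absurd this (notMem_empty _)
  have hres := BollAux.boll_fin I A' B' h'
  have hcards : ∀ i ∈ I, (A' i).card = (A i).card ∧ (B' i).card = (B i).card := by
    intro i hi
    exact ⟨card_image_of_injOn (hinj.mono (hsubA i hi)),
      card_image_of_injOn (hinj.mono (hsubB i hi))⟩
  calc ∑ i ∈ I, (((((A i).card + (B i).card).choose (A i).card : ℕ) : ℝ))⁻¹
      = ∑ i ∈ I, (((((A' i).card + (B' i).card).choose (A' i).card : ℕ) : ℝ))⁻¹ := by
        apply Finset.sum_congr rfl
        intro i hi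
        rw [(hcards i hi).1, (hcards i hi).2]
    _ ≤ 1 := hres
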